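/- For all positive reals x and y, (x - y)^2 ≤ ((x - y) * log(x / y)) * (x + y) / 2. -/
import Mathlib

lemma aux_hasDeriv (t : ℝ) (ht0 : 0 < t) :
    HasDerivAt (fun t : ℝ => (t + 1) * Real.log t - 2 * (t - 1))
      (1 * Real.log t + (t + 1) * (1 / t) - 2 * 1) t := by
  have h1 : HasDerivAt (fun t : ℝ => t + 1) 1 t := (hasDerivAt_id t).add_const 1
  have h2 : HasDerivAt Real.log (1 / t) t := by
    simpa [one_div] using Real.hasDerivAt_log ht0.ne'
  have h3 : HasDerivAt (fun t : ℝ => 2 * (t - 1)) (2 * 1) t :=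
    ((hasDerivAt_id t).sub_const 1).const_mul 2
  exact (h1.mul h2).sub h3

lemma aux_log_ineq : ∀ t : ℝ, 1 ≤ t → 2 * (t - 1) ≤ (t + 1) * Real.log t := by
  have hmono : MonotoneOn (fun t : ℝ => (t + 1) * Real.log t - 2 * (t - 1)) (Set.Ici 1) := by
    apply monotoneOn_of_deriv_nonneg (convex_Ici 1)
    · apply ContinuousOn.sub
      · exact (continuousOn_id.add continuousOn_const).mul
          (Real.continuousOn_log.mono (by
            intro t ht
            simp only [Set.mem_compl_iff, Set.mem_singleton_iff]
            intro h
            rw [h] at ht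
            simp at ht
            linarith))
      · fun_prop
    · intro t ht
      simp only [interior_Ici, Set.mem_Ioi] at ht
      exact (aux_hasDeriv t (by linarith)).differentiableAt.differentiableWithinAt
    · intro t ht
      simp only [interior_Ici, Set.mem_Ioi] at ht
      have ht0 : (0:ℝ) < t := by linarith
      rw [(aux_hasDeriv t ht0).deriv]
      have hlog : 1 - 1 / t ≤ Real.log t := by
        have := Real.log_le_sub_one_of_pos (x := 1 / t) (by positivity)
        rw [Real.log_div one_ne_zero ht0.ne'] at this
        simp only [Real.log_one, zero_sub] at this
        linarith
      have hinv : t * (1 / t) = 1 := mul_one_div_cancel ht0.ne'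
      nlinarith [hlog, hinv]
  intro t ht
  have := hmono (Set.mem_Ici.2 le_rfl) (Set.mem_Ici.2 ht) ht
  simp at this
  linarith

/-- For positive reals `x, y`: `(x - y)^2 ≤ ((x - y) log(x/y)) (x + y) / 2`. -/
theorem sq_sub_le_mul_log_mul_add_div_two (x y : ℝ) (hx : 0 < x) (hy : 0 < y) :
    (x - y) ^ 2 ≤ ((x - y) * Real.log (x / y)) * (x + y) / 2 := by
  rw [Real.log_div hx.ne' hy.ne']
  rcases le_total y x with h | h
  · have ht : 1 ≤ x / y := (one_le_div hy).2 h
    have key := aux_log_ineq (x / y) ht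
    rw [Real.log_div hx.ne' hy.ne'] at key
    have hxy : x / y * y = x := div_mul_cancel₀ x hy.ne'
    have key2 : 2 * (x - y) ≤ (x + y) * (Real.log x - Real.log y) := by
      have := mul_le_mul_of_nonneg_right key hy.le
      nlinarith
    nlinarith [mul_nonneg (sub_nonneg.2 h) (sub_nonneg.2 key2)]
  · have ht : 1 ≤ y / x := (one_le_div hx).2 h
    have key := aux_log_ineq (y / x) ht
    rw [Real.log_div hy.ne' hx.ne'] at key
    have hxy : y / x * x = y := div_mul_cancel₀ y hx.ne'
    have key2 : 2 * (y - x) ≤ (x + y) * (Real.log y - Real.log x) := by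
      have := mul_le_mul_of_nonneg_right key hx.le
      nlinarith
    nlinarith [mul_nonneg (sub_nonneg.2 h) (sub_nonneg.2 key2)]
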